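/- Let φ be a Schwartz function on ℝ and k ≥ 2, X ≥ 2 with k ≤ X^5. Then (1/log X)·∫_ℝ ( ψ(1/4 + (k+1)/4 + 2πit/log X) + ψ(1/4 + (k−1)/4 + 2πit/log X) ) φ(t) dt = \hat{φ}(0)·(log(k²) − log 16)/log X + O_ε(k^{−1+ε}) for every ε > 0, where ψ = Γ'/Γ is the digamma function. -/

import Mathlib

open Real Complex MeasureTheory Filter Topology

/-- The digamma function `ψ = Γ'/Γ` on the complex numbers. -/
noncomputable def digammaC (z : ℂ) : ℂ := deriv Complex.Gamma z / Complex.Gamma z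


noncomputable def gterm (n : ℕ) (z : ℂ) : ℂ := z/(n+1) - Complex.log (1 + z/(n+1))

lemma re_one_add_pos {n : ℕ} {z : ℂ} (hz : 0 < z.re) : 1 < (1 + z/(n+1)).re := by
  have h1 : ((n:ℂ)+1) = ((n+1:ℝ) : ℂ) := by push_cast; ring
  have h2 : (z/((n:ℂ)+1)).re = z.re / (n+1:ℝ) := by rw [h1, Complex.div_ofReal_re]
  have h3 : (0:ℝ) < z.re / (n+1:ℝ) := by positivity
  simp only [Complex.add_re, Complex.one_re, h2]
  linarith

lemma one_add_ne_zero {n : ℕ} {z : ℂ} (hz : 0 < z.re) : (1 + z/(n+1)) ≠ 0 := by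
  intro h
  have := re_one_add_pos (n := n) hz
  rw [h] at this; simp at this; linarith

lemma abs_one_add_ge {n : ℕ} {z : ℂ} (hz : 0 < z.re) : 1 ≤ ‖(1 + z/(n+1))‖ :=
  le_trans (re_one_add_pos hz).le (Complex.re_le_norm _)

lemma norm_log_aux {w : ℂ} (h1 : 1 ≤ ‖w‖) : ‖Complex.log w‖ ≤ Real.log ‖w‖ + 4 := by
  rw [Complex.log]
  refine (norm_add_le _ _).trans ?_
  have h2 : ‖(Real.log ‖w‖ : ℂ)‖ = Real.log ‖w‖ := by
    rw [Complex.norm_real, Real.norm_eq_abs, _root_.abs_of_nonneg (Real.log_nonneg h1)]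
  have h3 : ‖(w.arg : ℂ) * Complex.I‖ ≤ 4 := by
    rw [norm_mul, Complex.norm_I, mul_one, Complex.norm_real, Real.norm_eq_abs]
    exact (Complex.abs_arg_le_pi w).trans (by linarith [Real.pi_le_four])
  linarith [h2.le, h3]

lemma norm_nat_add_one (n : ℕ) : ‖((n:ℂ)+1)‖ = (n:ℝ)+1 := by
  rw [show ((n:ℂ)+1) = ((n+1:ℝ):ℂ) by push_cast; ring, Complex.norm_real, Real.norm_eq_abs,
    _root_.abs_of_pos (by positivity)]

lemma gterm_bound {R : ℝ} (hR : 1 ≤ R) {z : ℂ} (hre : 0 < z.re) (hz : ‖z‖ < R) (n : ℕ) :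
    ‖gterm n z‖ ≤ (2*R+4)*(2*R)^2 / ((n:ℝ)+1)^2 := by
  have hn1 : (0:ℝ) < (n:ℝ)+1 := by positivity
  have hw : ‖z/((n:ℂ)+1)‖ = ‖z‖/((n:ℝ)+1) := by rw [norm_div, norm_nat_add_one]
  rcases lt_or_ge ((n:ℝ)+1) (2*R) with hc | hc
  · -- crude bound
    have hb : ‖gterm n z‖ ≤ 2*R + 4 := by
      rw [gterm]
      refine (norm_sub_le _ _).trans ?_
      have h1 : ‖z/((n:ℂ)+1)‖ ≤ R := by
        rw [hw]
        calc ‖z‖/((n:ℝ)+1) ≤ ‖z‖/1 :=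
              div_le_div_of_nonneg_left (norm_nonneg z) one_pos (by linarith)
          _ ≤ R := by rw [div_one]; exact hz.le
      have habs := abs_one_add_ge (n := n) hre
      have h2 : ‖Complex.log (1 + z/((n:ℂ)+1))‖ ≤ R + 4 := by
        refine (norm_log_aux habs).trans ?_
        have hle : ‖(1 + z/((n:ℂ)+1))‖ ≤ 1 + R := by
          refine (norm_add_le _ _).trans ?_
          simp only [norm_one]
          linarith
        have hlog : Real.log ‖(1 + z/((n:ℂ)+1))‖ ≤ ‖(1 + z/((n:ℂ)+1))‖ - 1 :=
          Real.log_le_sub_one_of_pos (by linarith)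
        linarith
      linarith
    refine hb.trans ?_
    rw [le_div_iff₀ (by positivity)]
    nlinarith [mul_pos (show (0:ℝ) < 2*R - ((n:ℝ)+1) by linarith)
      (show (0:ℝ) < 2*R + ((n:ℝ)+1) by linarith), sq_nonneg ((n:ℝ)+1)]
  · -- tail bound
    have hsmall : ‖z/((n:ℂ)+1)‖ ≤ 1/2 := by
      rw [hw, div_le_iff₀ hn1]
      calc ‖z‖ ≤ R := hz.le
        _ = (1/2) * (2*R) := by ring
        _ ≤ (1/2) * ((n:ℝ)+1) := by linarith
    have h1 : ‖gterm n z‖ ≤ ‖z/((n:ℂ)+1)‖^2 := by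
      have hlt : ‖z/((n:ℂ)+1)‖ < 1 := lt_of_le_of_lt hsmall (by norm_num)
      have hb := Complex.norm_log_one_add_sub_self_le hlt
      have hinv : (1 - ‖z/((n:ℂ)+1)‖)⁻¹ ≤ 2 := by
        rw [inv_le_comm₀ (by linarith [hsmall]) (by norm_num)]
        linarith [hsmall]
      have hge : ‖gterm n z‖ = ‖Complex.log (1 + z/((n:ℂ)+1)) - z/((n:ℂ)+1)‖ := by
        rw [gterm, ← norm_neg]; congr 1; ring
      rw [hge]
      refine hb.trans ?_
      nlinarith [sq_nonneg ‖z/((n:ℂ)+1)‖, norm_nonneg (z/((n:ℂ)+1))]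
    refine h1.trans ?_
    rw [hw, div_pow, div_le_div_iff₀ (by positivity) (by positivity)]
    have h2 : ‖z‖^2 ≤ R^2 := by nlinarith [norm_nonneg z]
    have h3 : R^2 ≤ (2*R+4)*(2*R)^2 := by nlinarith [sq_nonneg R]
    nlinarith [mul_le_mul_of_nonneg_right (h2.trans h3) (sq_nonneg ((n:ℝ)+1))]




noncomputable def Lfun (z : ℂ) : ℂ :=
  -(Real.eulerMascheroniConstant : ℂ)*z - Complex.log z + ∑' n : ℕ, gterm n z

noncomputable def psiSer (z : ℂ) : ℂ :=
  -(Real.eulerMascheroniConstant : ℂ) - z⁻¹ + ∑' n : ℕ, (((n:ℂ)+1)⁻¹ - (z+((n:ℂ)+1))⁻¹)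

noncomputable def Ffun (t : Finset ℕ) (z : ℂ) : ℂ :=
  -(Real.eulerMascheroniConstant : ℂ)*z - Complex.log z + ∑ n ∈ t, gterm n z

lemma summable_c_div_sq (c : ℝ) : Summable (fun n : ℕ => c / ((n:ℝ)+1)^2) := by
  have h : Summable (fun n : ℕ => ((n:ℝ)+1)⁻¹ ^ 2) := by
    have := Real.summable_one_div_nat_pow.mpr (show 1 < 2 by norm_num)
    simpa [one_div] using (summable_nat_add_iff 1).mpr this
  simpa [div_eq_mul_inv, inv_pow] using h.mul_left c

lemma summable_gterm {z : ℂ} (hre : 0 < z.re) : Summable (fun n => gterm n z) := by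
  refine Summable.of_norm_bounded (summable_c_div_sq ((2*(‖z‖+1)+4)*(2*(‖z‖+1))^2)) ?_
  exact fun n => gterm_bound (by linarith [norm_nonneg z]) hre (by linarith) n

def Uset (R : ℝ) : Set ℂ := {z : ℂ | 0 < z.re ∧ ‖z‖ < R}

lemma isOpen_Uset (R : ℝ) : IsOpen (Uset R) :=
  (isOpen_lt continuous_const Complex.continuous_re).inter
    (isOpen_lt continuous_norm continuous_const)

lemma tlu (R : ℝ) (hR : 1 ≤ R) :
    TendstoLocallyUniformlyOn Ffun Lfun atTop (Uset R) := by
  apply TendstoUniformlyOn.tendstoLocallyUniformlyOn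
  have hsum : TendstoUniformlyOn (fun (t : Finset ℕ) z => ∑ n ∈ t, gterm n z)
      (fun z => ∑' n : ℕ, gterm n z) atTop (Uset R) := by
    refine tendstoUniformlyOn_tsum (summable_c_div_sq ((2*R+4)*(2*R)^2)) ?_
    exact fun n z hz => gterm_bound hR hz.1 hz.2 n
  have hconst : TendstoUniformlyOn
      (fun (_ : Finset ℕ) z => -(Real.eulerMascheroniConstant : ℂ)*z - Complex.log z)
      (fun z => -(Real.eulerMascheroniConstant : ℂ)*z - Complex.log z) atTop (Uset R) := by
    intro u hu
    filter_upwards with t x _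
    exact refl_mem_uniformity hu
  exact hconst.add hsum

lemma hasDerivAt_gterm (n : ℕ) {z : ℂ} (hre : 0 < z.re) :
    HasDerivAt (gterm n) (((n:ℂ)+1)⁻¹ - (z+((n:ℂ)+1))⁻¹) z := by
  have hn : ((n:ℂ)+1) ≠ 0 := by
    have : ((n+1:ℕ):ℂ) ≠ 0 := Nat.cast_ne_zero.mpr (Nat.succ_ne_zero n)
    push_cast at this; exact this
  have hinner : HasDerivAt (fun w : ℂ => 1 + w/((n:ℂ)+1)) (((n:ℂ)+1)⁻¹) z := by
    simpa [one_div] using ((hasDerivAt_id z).div_const ((n:ℂ)+1)).const_add 1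
  have hlog : HasDerivAt (fun w : ℂ => Complex.log (1 + w/((n:ℂ)+1)))
      ((1 + z/((n:ℂ)+1))⁻¹ * ((n:ℂ)+1)⁻¹) z :=
    (Complex.hasDerivAt_log (Or.inl (by linarith [re_one_add_pos (n := n) hre]))).comp z hinner
  have hfull := ((hasDerivAt_id z).div_const ((n:ℂ)+1)).sub hlog
  refine hfull.congr_deriv ?_
  have h0 : (1 + z/((n:ℂ)+1)) ≠ 0 := one_add_ne_zero hre
  have hz1 : z + ((n:ℂ)+1) ≠ 0 := by
    intro h
    have h2 : z.re + ((n:ℝ)+1) = 0 := by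
      have := congrArg Complex.re h; simpa using this
    have : (0:ℝ) ≤ (n:ℝ) := Nat.cast_nonneg n
    linarith
  have key : (1 + z/((n:ℂ)+1))⁻¹ * ((n:ℂ)+1)⁻¹ = (z+((n:ℂ)+1))⁻¹ := by
    rw [← mul_inv]
    congr 1
    field_simp
    ring
  rw [key, one_div]

lemma hasDerivAt_Ffun (t : Finset ℕ) {z : ℂ} (hre : 0 < z.re) :
    HasDerivAt (Ffun t)
      (-(Real.eulerMascheroniConstant : ℂ) - z⁻¹ + ∑ n ∈ t, (((n:ℂ)+1)⁻¹ - (z+((n:ℂ)+1))⁻¹)) z := by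
  have hz0 : z ≠ 0 := by intro h; rw [h] at hre; simp at hre
  have h1 : HasDerivAt (fun w : ℂ => -(Real.eulerMascheroniConstant : ℂ)*w)
      (-(Real.eulerMascheroniConstant : ℂ)) z := by
    simpa using (hasDerivAt_id z).const_mul (-(Real.eulerMascheroniConstant : ℂ))
  have h2 : HasDerivAt Complex.log z⁻¹ z := Complex.hasDerivAt_log (Or.inl hre)
  have h3 : HasDerivAt (fun w => ∑ n ∈ t, gterm n w)
      (∑ n ∈ t, (((n:ℂ)+1)⁻¹ - (z+((n:ℂ)+1))⁻¹)) z :=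
    HasDerivAt.fun_sum fun n _ => hasDerivAt_gterm n hre
  exact (h1.sub h2).add h3

lemma deriv_Lfun_eq {R : ℝ} (hR : 1 ≤ R) {z : ℂ} (hz : z ∈ Uset R) :
    HasDerivAt Lfun (psiSer z) z := by
  have hopen := isOpen_Uset R
  have hev : ∀ᶠ t in (atTop : Filter (Finset ℕ)), DifferentiableOn ℂ (Ffun t) (Uset R) := by
    filter_upwards with t
    exact fun w hw => ((hasDerivAt_Ffun t hw.1).differentiableAt).differentiableWithinAt
  have hdiff : DifferentiableOn ℂ Lfun (Uset R) := (tlu R hR).differentiableOn hev hopen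
  have hderconv := ((tlu R hR).deriv hev hopen).tendsto_at hz
  have heq : ∀ t : Finset ℕ, (deriv ∘ Ffun) t z
      = -(Real.eulerMascheroniConstant : ℂ) - z⁻¹ + ∑ n ∈ t, (((n:ℂ)+1)⁻¹ - (z+((n:ℂ)+1))⁻¹) :=
    fun t => (hasDerivAt_Ffun t hz.1).deriv
  rw [tendsto_congr heq] at hderconv
  have hsum : Tendsto (fun t : Finset ℕ => ∑ n ∈ t, (((n:ℂ)+1)⁻¹ - (z+((n:ℂ)+1))⁻¹)) atTop
      (𝓝 (deriv Lfun z + (Real.eulerMascheroniConstant : ℂ) + z⁻¹)) := by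
    have := hderconv.add_const ((Real.eulerMascheroniConstant : ℂ) + z⁻¹)
    convert this using 2 with t
    · ring
    · ring
  have hhs : HasSum (fun n : ℕ => (((n:ℂ)+1)⁻¹ - (z+((n:ℂ)+1))⁻¹))
      (deriv Lfun z + (Real.eulerMascheroniConstant : ℂ) + z⁻¹) := hsum
  have hts := hhs.tsum_eq
  have hpsi : psiSer z = deriv Lfun z := by
    rw [psiSer, hts]; ring
  have hda : DifferentiableAt ℂ Lfun z :=
    (hdiff.differentiableAt (hopen.mem_nhds hz))
  rw [hpsi]
  exact hda.hasDerivAt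

lemma harmonic_cast_eq (N : ℕ) :
    ((harmonic N : ℚ) : ℂ) = ∑ n ∈ Finset.range N, ((n:ℂ)+1)⁻¹ := by
  rw [harmonic]
  push_cast
  rfl

lemma prod_one_add_div {z : ℂ} (hre : 0 < z.re) (N : ℕ) :
    ∏ n ∈ Finset.range N, (1 + z/((n:ℂ)+1)) =
      (∏ j ∈ Finset.range (N+1), (z+(j:ℂ))) / (z * (N.factorial : ℂ)) := by
  have hz0 : z ≠ 0 := fun h => by rw [h] at hre; simp at hre
  have hn : ∀ n : ℕ, ((n:ℂ)+1) ≠ 0 := fun n => by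
    have : ((n+1:ℕ):ℂ) ≠ 0 := Nat.cast_ne_zero.mpr (Nat.succ_ne_zero n)
    push_cast at this; exact this
  have h1 : ∀ n ∈ Finset.range N, (1 + z/((n:ℂ)+1)) = (z+((n:ℂ)+1))/((n:ℂ)+1) := by
    intro n _
    field_simp [hn n]
    ring
  rw [Finset.prod_congr rfl h1, Finset.prod_div_distrib]
  have h2 : ∏ n ∈ Finset.range N, (z+((n:ℂ)+1)) =
      (∏ j ∈ Finset.range (N+1), (z+(j:ℂ))) / z := by
    rw [Finset.prod_range_succ' (fun j => z + (j:ℂ)) N]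
    push_cast
    rw [add_zero]
    field_simp
  have h3 : ∏ n ∈ Finset.range N, ((n:ℂ)+1) = (N.factorial : ℂ) := by
    rw [show ((N.factorial : ℕ):ℂ) = ((∏ n ∈ Finset.range N, (n+1) : ℕ) : ℂ) by
      rw [Finset.prod_range_add_one_eq_factorial]]
    push_cast
    rfl
  rw [h2, h3, div_div]

lemma exp_Ffun_range {z : ℂ} (hre : 0 < z.re) {N : ℕ} (hN : 1 ≤ N) :
    Complex.exp (Ffun (Finset.range N) z) =
      Complex.GammaSeq z N *
        Complex.exp (z * ((harmonic N : ℂ) - (Real.eulerMascheroniConstant : ℂ)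
          - Complex.log N)) := by
  have hz0 : z ≠ 0 := fun h => by rw [h] at hre; simp at hre
  set γ := (Real.eulerMascheroniConstant : ℂ)
  set H := ∑ n ∈ Finset.range N, ((n:ℂ)+1)⁻¹ with hH
  set P := ∏ j ∈ Finset.range (N+1), (z+(j:ℂ)) with hP
  have hPne : P ≠ 0 := by
    rw [hP]
    apply Finset.prod_ne_zero_iff.mpr
    intro j _
    intro h
    have h2 : z.re + (j:ℝ) = 0 := by
      have := congrArg Complex.re h; simpa using this
    have : (0:ℝ) ≤ (j:ℝ) := Nat.cast_nonneg j
    linarith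
  have hFne : ((N.factorial : ℕ):ℂ) ≠ 0 := Nat.cast_ne_zero.mpr (Nat.factorial_ne_zero N)
  have hNne : (N:ℂ) ≠ 0 := Nat.cast_ne_zero.mpr (by omega)
  have e1 : Ffun (Finset.range N) z =
      (-γ*z + z*H) - (Complex.log z + ∑ n ∈ Finset.range N, Complex.log (1 + z/((n:ℂ)+1))) := by
    rw [Ffun]
    simp only [gterm, Finset.sum_sub_distrib]
    rw [hH, Finset.mul_sum]
    simp only [div_eq_mul_inv, mul_comm]
    ring
  have e2 : Complex.exp (Complex.log z + ∑ n ∈ Finset.range N, Complex.log (1 + z/((n:ℂ)+1)))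
      = P / (N.factorial : ℂ) := by
    rw [Complex.exp_add, Complex.exp_sum, Complex.exp_log hz0]
    have : ∀ n ∈ Finset.range N, Complex.exp (Complex.log (1 + z/((n:ℂ)+1)))
        = 1 + z/((n:ℂ)+1) := fun n _ => Complex.exp_log (one_add_ne_zero hre)
    rw [Finset.prod_congr rfl this, prod_one_add_div hre N, ← hP]
    field_simp
  have e3 : Complex.GammaSeq z N = Complex.exp (Complex.log (N:ℂ) * z) * (N.factorial : ℂ) / P := by
    rw [Complex.GammaSeq, ← hP, Complex.cpow_def_of_ne_zero hNne]
  rw [e1, Complex.exp_sub, e2, e3, harmonic_cast_eq, ← hH]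
  have hcomb : Complex.exp (Complex.log (N:ℂ) * z) * (N.factorial:ℂ) / P
      * Complex.exp (z * (H - γ - Complex.log (N:ℂ)))
      = Complex.exp (Complex.log (N:ℂ) * z + z * (H - γ - Complex.log (N:ℂ)))
        * (N.factorial:ℂ) / P := by
    rw [Complex.exp_add]; ring
  have hexpeq : Complex.log (N:ℂ) * z + z * (H - γ - Complex.log (N:ℂ)) = -γ*z + z*H := by
    ring
  rw [hcomb, hexpeq, div_div_eq_mul_div]

lemma exp_Lfun {z : ℂ} (hre : 0 < z.re) : Complex.exp (Lfun z) = Complex.Gamma z := by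
  have hsum := summable_gterm hre
  have h1 : Tendsto (fun N => Ffun (Finset.range N) z) atTop (𝓝 (Lfun z)) := by
    have hs := hsum.hasSum.tendsto_sum_nat
    have := (tendsto_const_nhds (x := -(Real.eulerMascheroniConstant : ℂ)*z
      - Complex.log z) (f := atTop (α := ℕ))).add hs
    simpa [Ffun, Lfun] using this
  have h2 : Tendsto (fun N => Complex.exp (Ffun (Finset.range N) z)) atTop
      (𝓝 (Complex.exp (Lfun z))) := (Complex.continuous_exp.continuousAt.tendsto).comp h1
  have hfac : Tendsto (fun N : ℕ => Complex.exp (z * ((harmonic N : ℂ)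
      - (Real.eulerMascheroniConstant : ℂ) - Complex.log N))) atTop (𝓝 1) := by
    have hreal : Tendsto (fun N : ℕ => ((harmonic N : ℝ) - Real.log N
        - Real.eulerMascheroniConstant : ℝ)) atTop (𝓝 0) := by
      have := Real.tendsto_harmonic_sub_log.sub_const Real.eulerMascheroniConstant
      simpa using this
    have hc : Tendsto (fun N : ℕ => (((harmonic N : ℝ) - Real.log N
        - Real.eulerMascheroniConstant : ℝ) : ℂ)) atTop (𝓝 0) := by
      have := (Complex.continuous_ofReal.tendsto 0).comp hreal
      simpa [Function.comp_def] using this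
    have hev : ∀ᶠ N : ℕ in atTop, (((harmonic N : ℝ) - Real.log N
        - Real.eulerMascheroniConstant : ℝ) : ℂ)
        = (harmonic N : ℂ) - (Real.eulerMascheroniConstant : ℂ) - Complex.log N := by
      filter_upwards [eventually_ge_atTop 1] with N hN
      have hlog : Complex.log (N:ℂ) = ((Real.log N : ℝ) : ℂ) := by
        rw [show ((N:ℂ)) = (((N:ℝ)):ℂ) by push_cast; rfl,
          ← Complex.ofReal_log (Nat.cast_nonneg N)]
      rw [hlog]
      push_cast
      ring
    have hc2 : Tendsto (fun N : ℕ => (harmonic N : ℂ)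
        - (Real.eulerMascheroniConstant : ℂ) - Complex.log N) atTop (𝓝 0) :=
      hc.congr' hev
    have hmul := hc2.const_mul z
    rw [mul_zero] at hmul
    have hexp := (Complex.continuous_exp.tendsto 0).comp hmul
    simpa [Function.comp_def, Complex.exp_zero] using hexp
  have h3 : Tendsto (fun N => Complex.exp (Ffun (Finset.range N) z)) atTop
      (𝓝 (Complex.Gamma z)) := by
    have := (Complex.GammaSeq_tendsto_Gamma z).mul hfac
    rw [mul_one] at this
    apply this.congr'
    filter_upwards [eventually_ge_atTop 1] with N hN
    exact (exp_Ffun_range hre hN).symm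
  exact tendsto_nhds_unique h2 h3

theorem digammaC_eq_psiSer {z : ℂ} (hre : 0 < z.re) : digammaC z = psiSer z := by
  have hR : 1 ≤ ‖z‖ + 1 := le_add_of_nonneg_left (norm_nonneg z)
  have hzU : z ∈ Uset (‖z‖ + 1) := ⟨hre, by linarith⟩
  have hL := deriv_Lfun_eq hR hzU
  have hGamma_ev : Complex.Gamma =ᶠ[𝓝 z] (fun w => Complex.exp (Lfun w)) := by
    filter_upwards [(isOpen_Uset (‖z‖ + 1)).mem_nhds hzU] with w hw
    exact (exp_Lfun hw.1).symm
  have hd : HasDerivAt Complex.Gamma (Complex.exp (Lfun z) * psiSer z) z :=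
    (hL.cexp).congr_of_eventuallyEq hGamma_ev
  have hne : Complex.Gamma z ≠ 0 := by
    apply Complex.Gamma_ne_zero
    intro m h
    have h2 : z.re = -(m:ℝ) := by rw [h]; simp
    have : (0:ℝ) ≤ (m:ℝ) := Nat.cast_nonneg m
    linarith [hre.trans_eq h2]
  rw [digammaC, hd.deriv, exp_Lfun hre]
  field_simp



-- E0 : partial sums of 1/(a+m)^2
lemma sum_sq_le {a : ℝ} (ha : 1/2 ≤ a) (N : ℕ) :
    ∑ m ∈ Finset.range N, ((a+(m:ℝ))^2)⁻¹ ≤ 4/a - 4/(a+N) := by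
  have ha0 : 0 < a := by linarith
  induction N with
  | zero => simp
  | succ N ih =>
    rw [Finset.sum_range_succ]
    have hN : (0:ℝ) < a + N := by positivity
    have hN1 : (0:ℝ) < a + ((N:ℝ)+1) := by positivity
    have key : ((a+(N:ℝ))^2)⁻¹ ≤ 4/((a+(N:ℝ))*(a+(N:ℝ)+1)) := by
      rw [inv_eq_one_div, div_le_div_iff₀ (by positivity) (by positivity)]
      nlinarith [hN]
    have heq : 4/(a+(N:ℝ)) - 4/(a+(N:ℝ)+1) = 4/((a+(N:ℝ))*(a+(N:ℝ)+1)) := by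
      field_simp
      ring
    have hcast : a + ((N+1 : ℕ):ℝ) = a + (N:ℝ) + 1 := by push_cast; ring
    rw [hcast]
    linarith

lemma sum_sq_le' {a : ℝ} (ha : 1/2 ≤ a) (N : ℕ) :
    ∑ m ∈ Finset.range N, ((a+(m:ℝ))^2)⁻¹ ≤ 4/a := by
  have ha0 : 0 < a := by linarith
  have h := sum_sq_le ha N
  have : (0:ℝ) < a + N := by positivity
  have : 0 ≤ 4/(a+(N:ℝ)) := by positivity
  linarith

lemma summable_sq {a : ℝ} (ha : 1/2 ≤ a) : Summable (fun m : ℕ => ((a+(m:ℝ))^2)⁻¹) :=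
  summable_of_sum_range_le (fun m => by positivity) (sum_sq_le' ha)

lemma tsum_sq_le {a : ℝ} (ha : 1/2 ≤ a) : ∑' m : ℕ, ((a+(m:ℝ))^2)⁻¹ ≤ 4/a :=
  (summable_sq ha).tsum_le_of_sum_range_le (sum_sq_le' ha)

lemma ne_zero_of_re_pos' {z : ℂ} (h : 0 < z.re) : z ≠ 0 := fun hz => by
  rw [hz] at h; simp at h

lemma re_mk (a s : ℝ) : (((a:ℂ) + (s:ℂ)*Complex.I)).re = a := by simp

lemma norm_ge_re' (z : ℂ) : z.re ≤ ‖z‖ := Complex.re_le_norm z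

lemma inv_diff_bound {b s : ℝ} (hb : 0 < b) :
    ‖((b:ℂ))⁻¹ - ((b:ℂ)+(s:ℂ)*Complex.I)⁻¹‖ ≤ |s|/b^2 := by
  have hz : ((b:ℂ)+(s:ℂ)*Complex.I) ≠ 0 := ne_zero_of_re_pos' (by rw [re_mk]; exact hb)
  have hb0 : ((b:ℂ)) ≠ 0 := by exact_mod_cast ne_of_gt hb
  have h1 : ((b:ℂ))⁻¹ - ((b:ℂ)+(s:ℂ)*Complex.I)⁻¹
      = ((s:ℂ)*Complex.I)/((b:ℂ)*((b:ℂ)+(s:ℂ)*Complex.I)) := by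
    field_simp
    ring
  rw [h1, norm_div, norm_mul, norm_mul, Complex.norm_I, mul_one, Complex.norm_real,
    Complex.norm_real, Real.norm_eq_abs, Real.norm_eq_abs, _root_.abs_of_pos hb]
  have h2 : b ≤ ‖(b:ℂ)+(s:ℂ)*Complex.I‖ := by
    have := norm_ge_re' ((b:ℂ)+(s:ℂ)*Complex.I)
    rwa [re_mk] at this
  have h3 : b * b ≤ b * ‖(b:ℂ)+(s:ℂ)*Complex.I‖ := by nlinarith
  rw [sq]
  exact div_le_div_of_nonneg_left (abs_nonneg s) (by positivity) h3

lemma psiterm_norm_le {z : ℂ} (hre : 0 < z.re) (n : ℕ) :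
    ‖((n:ℂ)+1)⁻¹ - (z+((n:ℂ)+1))⁻¹‖ ≤ ‖z‖ / ((n:ℝ)+1)^2 := by
  have hn : ((n:ℂ)+1) ≠ 0 := by
    have : ((n+1:ℕ):ℂ) ≠ 0 := Nat.cast_ne_zero.mpr (Nat.succ_ne_zero n)
    push_cast at this; exact this
  have hzn : z + ((n:ℂ)+1) ≠ 0 := by
    apply ne_zero_of_re_pos'
    simp only [Complex.add_re, Complex.natCast_re, Complex.one_re]
    have : (0:ℝ) ≤ (n:ℝ) := Nat.cast_nonneg n
    linarith
  have h1 : ((n:ℂ)+1)⁻¹ - (z+((n:ℂ)+1))⁻¹ = z / (((n:ℂ)+1) * (z+((n:ℂ)+1))) := by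
    field_simp
    ring
  rw [h1, norm_div, norm_mul]
  have h2 : ‖((n:ℂ)+1)‖ = (n:ℝ)+1 := by
    rw [show ((n:ℂ)+1) = Complex.ofReal ((n:ℝ)+1) from by push_cast; ring, Complex.norm_real,
      Real.norm_eq_abs, _root_.abs_of_pos (by positivity)]
  have h3 : (n:ℝ)+1 ≤ ‖z+((n:ℂ)+1)‖ := by
    have := norm_ge_re' (z+((n:ℂ)+1))
    simp only [Complex.add_re, Complex.natCast_re, Complex.one_re] at this
    linarith
  rw [h2, sq]
  refine div_le_div_of_nonneg_left (norm_nonneg z) (by positivity) ?_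
  calc ((n:ℝ)+1) * ((n:ℝ)+1) ≤ ((n:ℝ)+1) * ‖z+((n:ℂ)+1)‖ := by nlinarith
    _ = _ := rfl

lemma summable_psiterm {z : ℂ} (hre : 0 < z.re) :
    Summable (fun n : ℕ => ((n:ℂ)+1)⁻¹ - (z+((n:ℂ)+1))⁻¹) := by
  refine Summable.of_norm_bounded ?_ (psiterm_norm_le hre)
  have h : Summable (fun m : ℕ => (((1:ℝ)+(m:ℝ))^2)⁻¹) := summable_sq (by norm_num)
  refine (h.mul_left ‖z‖).congr fun n => ?_
  rw [div_eq_mul_inv]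
  congr 2
  ring

lemma psiSer_vert {a s : ℝ} (ha : 1/2 ≤ a) :
    ‖psiSer ((a:ℂ) + (s:ℂ)*Complex.I) - psiSer ((a:ℂ))‖ ≤ 6*|s|/a := by
  have ha0 : (0:ℝ) < a := by linarith
  set z := (a:ℂ) + (s:ℂ)*Complex.I with hz
  have hzre : 0 < z.re := by rw [hz, re_mk]; exact ha0
  have hare : 0 < ((a:ℂ)).re := by simpa using ha0
  have hsz := summable_psiterm hzre
  have hsa := summable_psiterm hare
  have key : psiSer z - psiSer ((a:ℂ))
      = (((a:ℂ))⁻¹ - z⁻¹) + ∑' n : ℕ, ((((a:ℂ))+((n:ℂ)+1))⁻¹ - (z+((n:ℂ)+1))⁻¹) := by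
    have h₁ : ∑' n : ℕ, (((n:ℂ)+1)⁻¹ - (z+((n:ℂ)+1))⁻¹)
        - ∑' n : ℕ, (((n:ℂ)+1)⁻¹ - (((a:ℂ))+((n:ℂ)+1))⁻¹)
        = ∑' n : ℕ, ((((a:ℂ))+((n:ℂ)+1))⁻¹ - (z+((n:ℂ)+1))⁻¹) := by
      rw [← hsz.tsum_sub hsa]
      congr 1; funext n; ring
    rw [psiSer, psiSer]
    linear_combination h₁
  rw [key]
  -- termwise bounds
  have hterm : ∀ n : ℕ, ‖(((a:ℂ))+((n:ℂ)+1))⁻¹ - (z+((n:ℂ)+1))⁻¹‖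
      ≤ |s| * (((a+1)+(n:ℝ))^2)⁻¹ := by
    intro n
    have hb : (0:ℝ) < a + ((n:ℝ)+1) := by positivity
    have hcast1 : ((a:ℂ))+((n:ℂ)+1) = (((a + ((n:ℝ)+1)) : ℝ) : ℂ) := by push_cast; ring
    have hcast2 : z+((n:ℂ)+1) = ((((a + ((n:ℝ)+1)) : ℝ)) : ℂ) + (s:ℂ)*Complex.I := by
      rw [hz]; push_cast; ring
    rw [hcast1, hcast2]
    refine (inv_diff_bound hb).trans_eq ?_
    rw [div_eq_mul_inv]
    ring_nf
  have hsumnorm : Summable (fun n : ℕ => ‖(((a:ℂ))+((n:ℂ)+1))⁻¹ - (z+((n:ℂ)+1))⁻¹‖) := by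
    refine Summable.of_nonneg_of_le (fun n => norm_nonneg _) hterm ?_
    exact ((summable_sq (a := a+1) (by linarith)).mul_left |s|).congr fun n => rfl
  have htsum : ‖∑' n : ℕ, ((((a:ℂ))+((n:ℂ)+1))⁻¹ - (z+((n:ℂ)+1))⁻¹)‖
      ≤ |s| * (4/(a+1)) := by
    refine (norm_tsum_le_tsum_norm hsumnorm).trans ?_
    refine (Summable.tsum_le_tsum hterm hsumnorm
      (((summable_sq (a := a+1) (by linarith)).mul_left |s|).congr fun n => rfl)).trans ?_
    rw [tsum_mul_left]
    gcongr
    exact tsum_sq_le (by linarith)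
  have hfirst : ‖((a:ℂ))⁻¹ - z⁻¹‖ ≤ |s|/a^2 := inv_diff_bound ha0
  refine (norm_add_le _ _).trans ?_
  have h1 : |s|/a^2 ≤ 2*|s|/a := by
    rw [div_le_div_iff₀ (by positivity) ha0]
    nlinarith [mul_nonneg (mul_nonneg (abs_nonneg s) ha0.le) (show (0:ℝ) ≤ 2*a - 1 by linarith)]
  have h2 : |s| * (4/(a+1)) ≤ 4*|s|/a := by
    rw [mul_div_assoc']
    rw [div_le_div_iff₀ (by positivity) ha0]
    nlinarith [abs_nonneg s]
  calc ‖((a:ℂ))⁻¹ - z⁻¹‖ + ‖∑' n : ℕ, ((((a:ℂ))+((n:ℂ)+1))⁻¹ - (z+((n:ℂ)+1))⁻¹)‖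
      ≤ |s|/a^2 + |s| * (4/(a+1)) := add_le_add hfirst htsum
    _ ≤ 2*|s|/a + 4*|s|/a := add_le_add h1 h2
    _ = 6*|s|/a := by ring

lemma harmonic_cast_real (N : ℕ) :
    ((harmonic N : ℚ) : ℝ) = ∑ n ∈ Finset.range N, ((n:ℝ)+1)⁻¹ := by
  rw [harmonic]; push_cast; rfl

lemma log_one_add_bounds {x : ℝ} (hx : 0 < x) :
    x - x^2 ≤ Real.log (1+x) ∧ Real.log (1+x) ≤ x := by
  constructor
  · have h := Real.log_le_sub_one_of_pos (show (0:ℝ) < (1+x)⁻¹ by positivity)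
    rw [Real.log_inv] at h
    have h2 : 1 - (1+x)⁻¹ ≤ Real.log (1+x) := by linarith
    have h3 : x - x^2 ≤ 1 - (1+x)⁻¹ := by
      rw [show (1:ℝ) - (1+x)⁻¹ = x/(1+x) by field_simp; ring]
      rw [le_div_iff₀ (by positivity)]
      nlinarith
    linarith
  · have h := Real.log_le_sub_one_of_pos (show (0:ℝ) < 1+x by positivity)
    linarith

lemma psiSer_real {a : ℝ} (ha : 1/2 ≤ a) :
    ‖psiSer ((a:ℂ)) - ((Real.log a : ℝ):ℂ)‖ ≤ 4/a := by
  have ha0 : (0:ℝ) < a := by linarith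
  set γ := Real.eulerMascheroniConstant with hγ
  set g : ℕ → ℝ := fun m => Real.log (a+(m:ℝ)+1) - Real.log (a+(m:ℝ)) - (a+(m:ℝ))⁻¹ with hgdef
  have hg : ∀ m : ℕ, |g m| ≤ ((a+(m:ℝ))^2)⁻¹ := by
    intro m
    have hm : (0:ℝ) < a+(m:ℝ) := by positivity
    set x : ℝ := (a+(m:ℝ))⁻¹ with hxdef
    have hx : 0 < x := by positivity
    have hlogeq : Real.log (a+(m:ℝ)+1) - Real.log (a+(m:ℝ)) = Real.log (1+x) := by
      rw [show (1:ℝ)+x = (a+(m:ℝ)+1)/(a+(m:ℝ)) by rw [hxdef]; field_simp,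
        Real.log_div (by positivity) (ne_of_gt hm)]
    have hb := log_one_add_bounds hx
    have hgm : g m = Real.log (1+x) - x := by rw [hgdef]; simp only; rw [hlogeq]
    rw [hgm, abs_le]
    have hx2 : x^2 = ((a+(m:ℝ))^2)⁻¹ := by rw [hxdef, inv_pow]
    have hpos : (0:ℝ) ≤ ((a+(m:ℝ))^2)⁻¹ := by positivity
    constructor
    · rw [← hx2]
      linarith [hb.1]
    · linarith [hb.2]
  have hgsum : Summable g := by
    refine Summable.of_norm_bounded (summable_sq ha) ?_
    simpa [Real.norm_eq_abs] using hg
  set T := ∑' m, g m with hT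
  have hTabs : |T| ≤ 4/a := by
    rw [hT]
    have h1 : ‖∑' m, g m‖ ≤ ∑' m, ‖g m‖ :=
      norm_tsum_le_tsum_norm (by simpa [Real.norm_eq_abs] using hgsum.abs)
    rw [Real.norm_eq_abs] at h1
    refine h1.trans ?_
    refine le_trans (Summable.tsum_le_tsum (by simpa [Real.norm_eq_abs] using hg)
      (by simpa [Real.norm_eq_abs] using hgsum.abs) (summable_sq ha)) (tsum_sq_le ha)
  set rsum : ℕ → ℝ := fun m => ((m:ℝ)+1)⁻¹ - (a+((m:ℝ)+1))⁻¹ with hrdef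
  have hrpos : ∀ m : ℕ, 0 ≤ rsum m := by
    intro m
    rw [hrdef]
    simp only
    rw [sub_nonneg]
    apply inv_anti₀ (by positivity) (by linarith)
  have hrle : ∀ m : ℕ, rsum m ≤ a * (((1:ℝ)+(m:ℝ))^2)⁻¹ := by
    intro m
    rw [hrdef]
    simp only
    rw [show ((m:ℝ)+1)⁻¹ - (a+((m:ℝ)+1))⁻¹ = a/(((m:ℝ)+1)*(a+((m:ℝ)+1))) by
      field_simp; ring]
    rw [div_le_iff₀ (by positivity)]
    have h1 : 1 ≤ (((1:ℝ)+(m:ℝ))^2)⁻¹ * (((m:ℝ)+1)*(a+((m:ℝ)+1))) := by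
      rw [inv_mul_eq_div, le_div_iff₀ (by positivity), one_mul]
      nlinarith [Nat.cast_nonneg (α := ℝ) m]
    calc a = a * 1 := (mul_one a).symm
      _ ≤ a * ((((1:ℝ)+(m:ℝ))^2)⁻¹ * (((m:ℝ)+1)*(a+((m:ℝ)+1)))) :=
          mul_le_mul_of_nonneg_left h1 ha0.le
      _ = a * (((1:ℝ)+(m:ℝ))^2)⁻¹ * (((m:ℝ)+1)*(a+((m:ℝ)+1))) := by ring
  have hrsum : Summable rsum := by
    refine Summable.of_nonneg_of_le hrpos hrle ?_
    exact ((summable_sq (a := 1) (by norm_num)).mul_left a).congr fun n => rfl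
  -- partial sum algebra
  have halg : ∀ N : ℕ, 1 ≤ N → ∑ n ∈ Finset.range N, rsum n
      = (((harmonic N : ℚ):ℝ) - Real.log N) + (Real.log N - Real.log (a+(N:ℝ)+1))
        + Real.log a + (∑ m ∈ Finset.range (N+1), g m) + a⁻¹ := by
    intro N _
    have htel : ∑ m ∈ Finset.range (N+1), g m
        = Real.log (a+(N:ℝ)+1) - Real.log a - ∑ m ∈ Finset.range (N+1), (a+(m:ℝ))⁻¹ := by
      rw [hgdef]
      rw [Finset.sum_sub_distrib]
      congr 1
      have htel' := Finset.sum_range_sub (fun m => Real.log (a+(m:ℝ))) (N+1)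
      simp only [Nat.cast_add, Nat.cast_one, Nat.cast_zero, add_zero, ← add_assoc] at htel'
      exact htel'
    have hshift : ∑ m ∈ Finset.range (N+1), (a+(m:ℝ))⁻¹
        = a⁻¹ + ∑ n ∈ Finset.range N, (a+((n:ℝ)+1))⁻¹ := by
      rw [Finset.sum_range_succ' (fun m => (a+(m:ℝ))⁻¹) N]
      push_cast
      ring
    have hsplit : ∑ n ∈ Finset.range N, rsum n
        = ∑ n ∈ Finset.range N, ((n:ℝ)+1)⁻¹ - ∑ n ∈ Finset.range N, (a+((n:ℝ)+1))⁻¹ := by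
      rw [hrdef, ← Finset.sum_sub_distrib]
    rw [hsplit, harmonic_cast_real]
    have h2 : ∑ n ∈ Finset.range N, (a+((n:ℝ)+1))⁻¹
        = Real.log (a+(N:ℝ)+1) - Real.log a - (∑ m ∈ Finset.range (N+1), g m) - a⁻¹ := by
      rw [htel, hshift]; ring
    rw [h2]
    ring
  -- limits
  have c1 : Filter.Tendsto (fun N : ℕ => ((harmonic N : ℚ):ℝ) - Real.log N) atTop (𝓝 γ) :=
    Real.tendsto_harmonic_sub_log
  have c2 : Filter.Tendsto (fun N : ℕ => Real.log N - Real.log (a+(N:ℝ)+1)) atTop (𝓝 0) := by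
    have t0 : Filter.Tendsto (fun N : ℕ => (a+1)/(N:ℝ)) atTop (𝓝 0) :=
      Filter.Tendsto.div_atTop tendsto_const_nhds tendsto_natCast_atTop_atTop
    have t1 : Filter.Tendsto (fun N : ℕ => 1 + (a+1)/(N:ℝ)) atTop (𝓝 1) := by
      have := tendsto_const_nhds (x := (1:ℝ)) (f := atTop (α := ℕ)) |>.add t0
      simpa using this
    have t2 : Filter.Tendsto (fun N : ℕ => Real.log (1 + (a+1)/(N:ℝ))) atTop (𝓝 0) := by
      have := ((Real.continuousAt_log one_ne_zero).tendsto).comp t1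
      simpa [Real.log_one, Function.comp_def] using this
    have t3 : Filter.Tendsto (fun N : ℕ => -Real.log (1 + (a+1)/(N:ℝ))) atTop (𝓝 0) := by
      simpa using t2.neg
    refine t3.congr' ?_
    filter_upwards [Filter.eventually_ge_atTop 1] with N hN
    have hN0 : (0:ℝ) < (N:ℝ) := by exact_mod_cast hN
    rw [show (1:ℝ) + (a+1)/(N:ℝ) = (a+(N:ℝ)+1)/(N:ℝ) by field_simp; ring,
      Real.log_div (by positivity) (ne_of_gt hN0)]
    ring
  have c3 : Filter.Tendsto (fun N : ℕ => ∑ m ∈ Finset.range (N+1), g m) atTop (𝓝 T) :=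
    (hgsum.hasSum.tendsto_sum_nat).comp (tendsto_add_atTop_nat 1)
  have hlim2 : Filter.Tendsto (fun N : ℕ => ∑ n ∈ Finset.range N, rsum n) atTop
      (𝓝 (γ + 0 + Real.log a + T + a⁻¹)) := by
    refine Filter.Tendsto.congr' ?_ ((((c1.add c2).add_const (Real.log a)).add c3).add_const a⁻¹)
    filter_upwards [Filter.eventually_ge_atTop 1] with N hN
    exact (halg N hN).symm
  have huniq : ∑' m, rsum m = γ + Real.log a + T + a⁻¹ := by
    have := tendsto_nhds_unique (hrsum.hasSum.tendsto_sum_nat) hlim2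
    rw [this]; ring
  -- cast to ℂ
  have hcast : psiSer ((a:ℂ)) = Complex.ofReal (-γ - a⁻¹ + ∑' m, rsum m) := by
    rw [psiSer]
    have hterm : ∀ n : ℕ, (((n:ℂ)+1)⁻¹ - ((a:ℂ)+((n:ℂ)+1))⁻¹) = Complex.ofReal (rsum n) := by
      intro n
      rw [hrdef]
      push_cast
      ring
    rw [tsum_congr hterm, ← Complex.ofReal_tsum]
    push_cast
    ring
  rw [hcast, huniq]
  rw [show Complex.ofReal (-γ - a⁻¹ + (γ + Real.log a + T + a⁻¹)) - ((Real.log a : ℝ):ℂ)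
      = Complex.ofReal T by push_cast; ring]
  rw [Complex.norm_real, Real.norm_eq_abs]
  exact hTabs



lemma psiSum_bound {k : ℕ} (hk : 2 ≤ k) (s : ℝ) :
    ‖(digammaC (((((k:ℝ)+2)/4 : ℝ) : ℂ) + (s:ℂ)*Complex.I)
        + digammaC ((((k:ℝ)/4 : ℝ) : ℂ) + (s:ℂ)*Complex.I))
      - ((Real.log ((k:ℝ)^2) - Real.log 16 : ℝ) : ℂ)‖ ≤ (34 + 48*|s|)/k := by
  have hk2 : (2:ℝ) ≤ (k:ℝ) := by exact_mod_cast hk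
  have hk0 : (0:ℝ) < (k:ℝ) := by linarith
  set a1 : ℝ := ((k:ℝ)+2)/4 with ha1def
  set a2 : ℝ := (k:ℝ)/4 with ha2def
  have ha1 : 1/2 ≤ a1 := by rw [ha1def]; linarith
  have ha2 : 1/2 ≤ a2 := by rw [ha2def]; linarith
  have ha10 : (0:ℝ) < a1 := by linarith
  have ha20 : (0:ℝ) < a2 := by linarith
  have hre1 : (0:ℝ) < (((a1:ℝ):ℂ) + (s:ℂ)*Complex.I).re := by rw [re_mk]; exact ha10
  have hre2 : (0:ℝ) < (((a2:ℝ):ℂ) + (s:ℂ)*Complex.I).re := by rw [re_mk]; exact ha20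
  have hra1 : (0:ℝ) < (((a1:ℝ):ℂ)).re := by simpa using ha10
  have hra2 : (0:ℝ) < (((a2:ℝ):ℂ)).re := by simpa using ha20
  rw [digammaC_eq_psiSer hre1, digammaC_eq_psiSer hre2]
  have hdec : (psiSer (((a1:ℝ):ℂ) + (s:ℂ)*Complex.I) + psiSer (((a2:ℝ):ℂ) + (s:ℂ)*Complex.I))
      - ((Real.log ((k:ℝ)^2) - Real.log 16 : ℝ) : ℂ)
      = (psiSer (((a1:ℝ):ℂ) + (s:ℂ)*Complex.I) - psiSer (((a1:ℝ):ℂ)))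
        + (psiSer (((a2:ℝ):ℂ) + (s:ℂ)*Complex.I) - psiSer (((a2:ℝ):ℂ)))
        + (psiSer (((a1:ℝ):ℂ)) - ((Real.log a1 : ℝ):ℂ))
        + (psiSer (((a2:ℝ):ℂ)) - ((Real.log a2 : ℝ):ℂ))
        + ((Real.log a1 + Real.log a2 - (Real.log ((k:ℝ)^2) - Real.log 16) : ℝ):ℂ) := by
    push_cast
    ring
  rw [hdec]
  have b1 := psiSer_vert (a := a1) (s := s) ha1
  have b2 := psiSer_vert (a := a2) (s := s) ha2
  have b3 := psiSer_real ha1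
  have b4 := psiSer_real ha2
  have b5 : ‖((Real.log a1 + Real.log a2 - (Real.log ((k:ℝ)^2) - Real.log 16) : ℝ):ℂ)‖
      ≤ 2/(k:ℝ) := by
    rw [Complex.norm_real, Real.norm_eq_abs]
    have hlogk2 : Real.log ((k:ℝ)^2) = 2 * Real.log k := by
      rw [show ((k:ℝ)^2) = (k:ℝ)^(2:ℕ) from rfl, Real.log_pow]; push_cast; ring
    have hlog16 : Real.log (16:ℝ) = 2 * Real.log 4 := by
      rw [show (16:ℝ) = 4^(2:ℕ) by norm_num, Real.log_pow]; push_cast; ring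
    have hla2 : Real.log a2 = Real.log k - Real.log 4 := by
      rw [ha2def, Real.log_div (ne_of_gt hk0) (by norm_num)]
    have hkey : Real.log a1 + Real.log a2 - (Real.log ((k:ℝ)^2) - Real.log 16)
        = Real.log a1 - Real.log a2 := by
      rw [hlogk2, hlog16, hla2]; ring
    rw [hkey]
    have hmono : Real.log a2 ≤ Real.log a1 := Real.log_le_log ha20 (by rw [ha1def, ha2def]; linarith)
    have hdiv : Real.log a1 - Real.log a2 = Real.log (a1/a2) :=
      (Real.log_div (ne_of_gt ha10) (ne_of_gt ha20)).symm
    have hub : Real.log (a1/a2) ≤ a1/a2 - 1 := Real.log_le_sub_one_of_pos (by positivity)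
    have hval : a1/a2 - 1 = 2/(k:ℝ) := by
      rw [ha1def, ha2def]; field_simp; ring
    rw [_root_.abs_of_nonneg (by linarith : (0:ℝ) ≤ Real.log a1 - Real.log a2), hdiv]
    linarith [hub, hval.le]
  have hinv1 : 6*|s|/a1 ≤ 24*|s|/(k:ℝ) := by
    rw [div_le_div_iff₀ ha10 hk0]
    nlinarith [abs_nonneg s]
  have hinv2 : 6*|s|/a2 ≤ 24*|s|/(k:ℝ) := by
    rw [div_le_div_iff₀ ha20 hk0]
    nlinarith [abs_nonneg s]
  have hinv3 : 4/a1 ≤ 16/(k:ℝ) := by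
    rw [div_le_div_iff₀ ha10 hk0]; nlinarith
  have hinv4 : 4/a2 ≤ 16/(k:ℝ) := by
    rw [div_le_div_iff₀ ha20 hk0]; nlinarith
  have n1 := (norm_add_le (psiSer (((a1:ℝ):ℂ) + (s:ℂ)*Complex.I) - psiSer (((a1:ℝ):ℂ)))
    (psiSer (((a2:ℝ):ℂ) + (s:ℂ)*Complex.I) - psiSer (((a2:ℝ):ℂ)))).trans (add_le_add b1 b2)
  have n2 := (norm_add_le _ (psiSer (((a1:ℝ):ℂ)) - ((Real.log a1 : ℝ):ℂ))).trans
    (add_le_add n1 b3)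
  have n3 := (norm_add_le _ (psiSer (((a2:ℝ):ℂ)) - ((Real.log a2 : ℝ):ℂ))).trans
    (add_le_add n2 b4)
  have n4 := (norm_add_le _
    ((Real.log a1 + Real.log a2 - (Real.log ((k:ℝ)^2) - Real.log 16) : ℝ):ℂ)).trans
    (add_le_add n3 b5)
  have heq : (34 + 48*|s|)/(k:ℝ) = 24*|s|/(k:ℝ) + 24*|s|/(k:ℝ) + 16/(k:ℝ) + 16/(k:ℝ) + 2/(k:ℝ) := by
    ring
  rw [heq]
  linarith [n4, hinv1, hinv2, hinv3, hinv4]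




lemma re_mk' (a s : ℝ) : (((a:ℂ) + (s:ℂ)*Complex.I)).re = a := by simp

lemma continuousOn_digammaC : ContinuousOn digammaC {z : ℂ | 0 < z.re} := by
  have hopen : IsOpen {z : ℂ | 0 < z.re} := isOpen_lt continuous_const Complex.continuous_re
  have hne : ∀ z ∈ {z : ℂ | 0 < z.re}, ∀ m : ℕ, z ≠ -(m:ℂ) := by
    intro z hz m h
    have h2 : z.re = -(m:ℝ) := by rw [h]; simp
    have h3 : (0:ℝ) ≤ (m:ℝ) := Nat.cast_nonneg m
    have h4 : (0:ℝ) < z.re := hz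
    rw [h2] at h4
    linarith
  have hdiff : DifferentiableOn ℂ Complex.Gamma {z : ℂ | 0 < z.re} := fun z hz =>
    (Complex.differentiableAt_Gamma z (hne z hz)).differentiableWithinAt
  have han := hdiff.analyticOnNhd hopen
  exact ((han.deriv).continuousOn).div hdiff.continuousOn
    (fun z hz => Complex.Gamma_ne_zero (hne z hz))

/-- for Schwartz `φ`, integers `k ≥ 2` and reals `X ≥ 2` with `k ≤ X^5`,
`(1/log X)∫ (ψ(1/4+(k+1)/4+2πit/log X) + ψ(1/4+(k-1)/4+2πit/log X)) φ(t) dt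
  = φ̂(0)(log k² - log 16)/log X + O_ε(k^{-1+ε})`. -/
theorem stmt13 (φ : SchwartzMap ℝ ℂ) (ε : ℝ) (hε : 0 < ε) :
    ∃ C : ℝ, 0 < C ∧ ∀ (k : ℕ) (X : ℝ), 2 ≤ k → 2 ≤ X → (k : ℝ) ≤ X ^ 5 →
      ‖(1 / (Real.log X : ℂ)) *
          (∫ t : ℝ,
            (digammaC (1 / 4 + ((k : ℂ) + 1) / 4 +
                2 * Real.pi * Complex.I * t / (Real.log X : ℂ)) +
              digammaC (1 / 4 + ((k : ℂ) - 1) / 4 +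
                2 * Real.pi * Complex.I * t / (Real.log X : ℂ))) * φ t) -
        (∫ t : ℝ, φ t) *
          ((Real.log ((k : ℝ) ^ 2) - Real.log 16) / Real.log X : ℝ)‖
        ≤ C * (k : ℝ) ^ (-1 + ε) := by
  have hI0' : Integrable (fun t : ℝ => ‖φ t‖) := φ.integrable.norm
  have hI1' : Integrable (fun t : ℝ => ‖t‖ * ‖φ t‖) := by
    simpa using φ.integrable_pow_mul (volume) 1
  have hI0pos : 0 ≤ ∫ t : ℝ, ‖φ t‖ := integral_nonneg fun t => norm_nonneg _
  have hI1pos : 0 ≤ ∫ t : ℝ, ‖t‖ * ‖φ t‖ :=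
    integral_nonneg fun t => mul_nonneg (norm_nonneg _) (norm_nonneg _)
  refine ⟨68*(∫ t : ℝ, ‖φ t‖) + 960*(∫ t : ℝ, ‖t‖ * ‖φ t‖) + 1, by linarith, ?_⟩
  intro k X hk hX _
  have hk2 : (2:ℝ) ≤ (k:ℝ) := by exact_mod_cast hk
  have hk0 : (0:ℝ) < (k:ℝ) := by linarith
  have hL2 : Real.log 2 ≤ Real.log X := Real.log_le_log (by norm_num) hX
  have hlog2 := Real.log_two_gt_d9
  have hL0 : (0:ℝ) < Real.log X := by linarith
  have hLne : ((Real.log X : ℝ):ℂ) ≠ 0 := by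
    simpa using ne_of_gt hL0
  -- |st t| ≤ 10 |t|
  have hst : ∀ t : ℝ, |2*Real.pi*t/Real.log X| ≤ 10*|t| := by
    intro t
    have hpi := Real.pi_lt_d2
    have hpi0 := Real.pi_pos
    rw [show 2*Real.pi*t/Real.log X = (2*Real.pi/Real.log X)*t by ring, abs_mul,
      _root_.abs_of_pos (by positivity : (0:ℝ) < 2*Real.pi/Real.log X)]
    have hfrac : 2*Real.pi/Real.log X ≤ 10 := by
      rw [div_le_iff₀ hL0]
      nlinarith
    exact mul_le_mul_of_nonneg_right hfrac (abs_nonneg t) |>.trans_eq rfl |>.trans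
      (by nlinarith [abs_nonneg t])
  -- argument identification
  have harg1 : ∀ t : ℝ, (1/4 + ((k:ℂ)+1)/4 + 2*(Real.pi:ℝ)*Complex.I*(t:ℂ)/((Real.log X : ℝ):ℂ))
      = (((((k:ℝ)+2)/4 : ℝ)) : ℂ) + ((2*Real.pi*t/Real.log X : ℝ):ℂ)*Complex.I := by
    intro t
    push_cast
    field_simp
    ring
  have harg2 : ∀ t : ℝ, (1/4 + ((k:ℂ)-1)/4 + 2*(Real.pi:ℝ)*Complex.I*(t:ℂ)/((Real.log X : ℝ):ℂ))
      = ((((k:ℝ)/4 : ℝ)) : ℂ) + ((2*Real.pi*t/Real.log X : ℝ):ℂ)*Complex.I := by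
    intro t
    push_cast
    field_simp
    ring
  -- abbreviations (plain functions, no set)
  have hd := Real.log ((k:ℝ)^2) - Real.log 16
  -- continuity of the digamma part
  have hstc : Continuous fun t : ℝ => (2*Real.pi*t/Real.log X : ℝ) := by fun_prop
  have hca : ∀ a : ℝ, 0 < a → Continuous (fun t : ℝ =>
      digammaC (((a:ℝ):ℂ) + ((2*Real.pi*t/Real.log X : ℝ):ℂ)*Complex.I)) := by
    intro a ha
    apply continuousOn_digammaC.comp_continuous
    · exact continuous_const.add ((Complex.continuous_ofReal.comp hstc).mul continuous_const)
    · intro t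
      show (0:ℝ) < _
      rw [re_mk']
      exact ha
  have hψcont : Continuous (fun t : ℝ =>
      digammaC ((((((k:ℝ)+2)/4 : ℝ)) : ℂ) + ((2*Real.pi*t/Real.log X : ℝ):ℂ)*Complex.I)
      + digammaC (((((k:ℝ)/4 : ℝ)) : ℂ) + ((2*Real.pi*t/Real.log X : ℝ):ℂ)*Complex.I)) :=
    (hca _ (by positivity)).add (hca _ (by positivity))
  -- pointwise bounds
  have hpt : ∀ t : ℝ, ‖(digammaC ((((((k:ℝ)+2)/4 : ℝ)) : ℂ) + ((2*Real.pi*t/Real.log X : ℝ):ℂ)*Complex.I)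
      + digammaC (((((k:ℝ)/4 : ℝ)) : ℂ) + ((2*Real.pi*t/Real.log X : ℝ):ℂ)*Complex.I))
      - ((Real.log ((k:ℝ)^2) - Real.log 16 : ℝ) : ℂ)‖ ≤ (34 + 480*‖t‖)/(k:ℝ) := by
    intro t
    refine (psiSum_bound hk (2*Real.pi*t/Real.log X)).trans ?_
    have := hst t
    rw [div_le_div_iff₀ hk0 hk0]
    have h48 : 48*|2*Real.pi*t/Real.log X| ≤ 480*|t| := by linarith [hst t]
    rw [Real.norm_eq_abs]
    nlinarith [abs_nonneg t]
  -- integrability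
  have hIψ : Integrable (fun t : ℝ =>
      (digammaC ((((((k:ℝ)+2)/4 : ℝ)) : ℂ) + ((2*Real.pi*t/Real.log X : ℝ):ℂ)*Complex.I)
      + digammaC (((((k:ℝ)/4 : ℝ)) : ℂ) + ((2*Real.pi*t/Real.log X : ℝ):ℂ)*Complex.I)) * φ t) := by
    set D : ℝ := |Real.log ((k:ℝ)^2) - Real.log 16| with hDdef
    refine Integrable.mono' ((hI0'.const_mul (17 + D)).add (hI1'.const_mul 240))
      (hψcont.mul φ.continuous).aestronglyMeasurable (ae_of_all _ fun t => ?_)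
    rw [norm_mul]
    have h1 := hpt t
    have h2 : ‖digammaC ((((((k:ℝ)+2)/4 : ℝ)) : ℂ) + ((2*Real.pi*t/Real.log X : ℝ):ℂ)*Complex.I)
      + digammaC (((((k:ℝ)/4 : ℝ)) : ℂ) + ((2*Real.pi*t/Real.log X : ℝ):ℂ)*Complex.I)‖
        ≤ (34 + 480*‖t‖)/(k:ℝ) + D := by
      have h3 := norm_sub_norm_le ((digammaC ((((((k:ℝ)+2)/4 : ℝ)) : ℂ) + ((2*Real.pi*t/Real.log X : ℝ):ℂ)*Complex.I)
        + digammaC (((((k:ℝ)/4 : ℝ)) : ℂ) + ((2*Real.pi*t/Real.log X : ℝ):ℂ)*Complex.I)))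
        ((Real.log ((k:ℝ)^2) - Real.log 16 : ℝ) : ℂ)
      have h4 : ‖((Real.log ((k:ℝ)^2) - Real.log 16 : ℝ) : ℂ)‖ = D := by
        rw [Complex.norm_real, Real.norm_eq_abs]
      linarith
    have h5 : (34 + 480*‖t‖)/(k:ℝ) ≤ 17 + 240*‖t‖ := by
      rw [div_le_iff₀ hk0]
      nlinarith [norm_nonneg t]
    simp only [Pi.add_apply]
    have h8 := mul_le_mul_of_nonneg_right
      (h2.trans (by linarith : (34 + 480*‖t‖)/(k:ℝ) + D ≤ 17 + 240*‖t‖ + D)) (norm_nonneg (φ t))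
    nlinarith [h8]
  -- main rewrite
  have hsub : (∫ t : ℝ, ((digammaC ((((((k:ℝ)+2)/4 : ℝ)) : ℂ) + ((2*Real.pi*t/Real.log X : ℝ):ℂ)*Complex.I)
      + digammaC (((((k:ℝ)/4 : ℝ)) : ℂ) + ((2*Real.pi*t/Real.log X : ℝ):ℂ)*Complex.I))
      - ((Real.log ((k:ℝ)^2) - Real.log 16 : ℝ) : ℂ)) * φ t)
      = (∫ t : ℝ, (digammaC ((((((k:ℝ)+2)/4 : ℝ)) : ℂ) + ((2*Real.pi*t/Real.log X : ℝ):ℂ)*Complex.I)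
      + digammaC (((((k:ℝ)/4 : ℝ)) : ℂ) + ((2*Real.pi*t/Real.log X : ℝ):ℂ)*Complex.I)) * φ t)
      - ((Real.log ((k:ℝ)^2) - Real.log 16 : ℝ) : ℂ) * (∫ t : ℝ, φ t) := by
    rw [← integral_const_mul]
    rw [← integral_sub hIψ (φ.integrable.const_mul _)]
    congr 1
    funext t
    ring
  have hintrw : (∫ t : ℝ,
            (digammaC (1 / 4 + ((k : ℂ) + 1) / 4 +
                2 * Real.pi * Complex.I * t / (Real.log X : ℂ)) +
              digammaC (1 / 4 + ((k : ℂ) - 1) / 4 +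
                2 * Real.pi * Complex.I * t / (Real.log X : ℂ))) * φ t)
      = ∫ t : ℝ, (digammaC ((((((k:ℝ)+2)/4 : ℝ)) : ℂ) + ((2*Real.pi*t/Real.log X : ℝ):ℂ)*Complex.I)
      + digammaC (((((k:ℝ)/4 : ℝ)) : ℂ) + ((2*Real.pi*t/Real.log X : ℝ):ℂ)*Complex.I)) * φ t := by
    apply integral_congr_ae
    filter_upwards with t
    rw [harg1 t, harg2 t]
  have key : (1 / (Real.log X : ℂ)) *
          (∫ t : ℝ,
            (digammaC (1 / 4 + ((k : ℂ) + 1) / 4 +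
                2 * Real.pi * Complex.I * t / (Real.log X : ℂ)) +
              digammaC (1 / 4 + ((k : ℂ) - 1) / 4 +
                2 * Real.pi * Complex.I * t / (Real.log X : ℂ))) * φ t) -
        (∫ t : ℝ, φ t) *
          ((Real.log ((k : ℝ) ^ 2) - Real.log 16) / Real.log X : ℝ)
      = (1 / (Real.log X : ℂ)) *
        (∫ t : ℝ, ((digammaC ((((((k:ℝ)+2)/4 : ℝ)) : ℂ) + ((2*Real.pi*t/Real.log X : ℝ):ℂ)*Complex.I)
      + digammaC (((((k:ℝ)/4 : ℝ)) : ℂ) + ((2*Real.pi*t/Real.log X : ℝ):ℂ)*Complex.I))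
      - ((Real.log ((k:ℝ)^2) - Real.log 16 : ℝ) : ℂ)) * φ t) := by
    rw [hintrw, hsub]
    push_cast
    ring
  rw [key, norm_mul]
  have hnorm1L : ‖1/((Real.log X : ℝ):ℂ)‖ ≤ 2 := by
    rw [norm_div, norm_one, Complex.norm_real, Real.norm_eq_abs, _root_.abs_of_pos hL0]
    rw [div_le_iff₀ hL0]
    linarith
  have hnormint : ‖∫ t : ℝ, ((digammaC ((((((k:ℝ)+2)/4 : ℝ)) : ℂ) + ((2*Real.pi*t/Real.log X : ℝ):ℂ)*Complex.I)
      + digammaC (((((k:ℝ)/4 : ℝ)) : ℂ) + ((2*Real.pi*t/Real.log X : ℝ):ℂ)*Complex.I))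
      - ((Real.log ((k:ℝ)^2) - Real.log 16 : ℝ) : ℂ)) * φ t‖
      ≤ (34/(k:ℝ))*(∫ t : ℝ, ‖φ t‖) + (480/(k:ℝ))*(∫ t : ℝ, ‖t‖ * ‖φ t‖) := by
    have hgint : Integrable (fun t : ℝ => (34/(k:ℝ))*‖φ t‖ + (480/(k:ℝ))*(‖t‖*‖φ t‖)) :=
      (hI0'.const_mul _).add (hI1'.const_mul _)
    refine (norm_integral_le_of_norm_le hgint (ae_of_all _ fun t => ?_)).trans_eq ?_
    · rw [norm_mul]
      calc ‖_‖ * ‖φ t‖ ≤ ((34 + 480*‖t‖)/(k:ℝ)) * ‖φ t‖ :=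
            mul_le_mul_of_nonneg_right (hpt t) (norm_nonneg _)
        _ = (34/(k:ℝ))*‖φ t‖ + (480/(k:ℝ))*(‖t‖*‖φ t‖) := by ring
    · rw [integral_add (hI0'.const_mul _) (hI1'.const_mul _), integral_const_mul,
        integral_const_mul]
  have hrpow : 1/(k:ℝ) ≤ (k:ℝ)^(-1+ε : ℝ) := by
    have h1 : (k:ℝ)^(-1:ℝ) ≤ (k:ℝ)^(-1+ε : ℝ) :=
      Real.rpow_le_rpow_of_exponent_le (by linarith) (by linarith)
    rw [Real.rpow_neg_one] at h1
    rw [one_div]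
    exact h1
  calc ‖1/((Real.log X : ℝ):ℂ)‖ * ‖_‖
      ≤ 2 * ((34/(k:ℝ))*(∫ t : ℝ, ‖φ t‖) + (480/(k:ℝ))*(∫ t : ℝ, ‖t‖ * ‖φ t‖)) := by
        apply mul_le_mul hnorm1L hnormint (norm_nonneg _) (by norm_num)
    _ = (68*(∫ t : ℝ, ‖φ t‖) + 960*(∫ t : ℝ, ‖t‖ * ‖φ t‖)) * (1/(k:ℝ)) := by ring
    _ ≤ (68*(∫ t : ℝ, ‖φ t‖) + 960*(∫ t : ℝ, ‖t‖ * ‖φ t‖) + 1) * ((k:ℝ)^(-1+ε : ℝ)) := by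
        apply mul_le_mul (by linarith) hrpow (by positivity) (by linarith)
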